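/- Let μ be a Borel probability measure on 𝒴̃ and define φ : 𝒵 → ℝ by φ(Z) := μ(Q̃_Z). Then: (i) φ(constant D) = 1; (ii) φ is positive definite with respect to ∨, i.e. for every n, all Z₁, …, Zₙ ∈ 𝒵 and all c₁, …, cₙ ∈ ℝ, Σ_{i,j=1}^{n} c_i c_j φ(Z_i ∨ Z_j) ≥ 0; (iii) φ is continuous from below, i.e. for every Z ∈ 𝒵, φ(Z_{-ε}) → φ(Z) as ε ↓ 0. -/

import Mathlib

open Set NNReal ENNReal

/-- A "partial order" on `M`: a reflexive and transitive (not necessarily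
antisymmetric) relation, identified with a subset of `M × M`. -/
def IsPO {M : Type*} (V : Set (M × M)) : Prop :=
  (∀ j : M, (j, j) ∈ V) ∧ ∀ j k l : M, (j, k) ∈ V → (k, l) ∈ V → (j, l) ∈ V

/-- The diagonal relation `D`. -/
def diagRel (M : Type*) : Set (M × M) := {p : M × M | p.1 = p.2}

/-- The smallest partial order containing `S` (reflexive-transitive closure). -/
def poGen {M : Type*} (S : Set (M × M)) : Set (M × M) :=
  ⋂₀ {V : Set (M × M) | IsPO V ∧ S ⊆ V}

/-- The join of two partial orders: the smallest partial order containing their union. -/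
def poJoin {M : Type*} (V W : Set (M × M)) : Set (M × M) := poGen (V ∪ W)

/-- Membership in `𝒴`: maps `Y : [0,∞) → {partial orders on M}` with `Y 0 = D`,
increasing, and left-continuous. -/
def MemY {M : Type*} (Y : ℝ≥0 → Set (M × M)) : Prop :=
  (∀ t : ℝ≥0, IsPO (Y t)) ∧ Y 0 = diagRel M ∧
    (∀ s t : ℝ≥0, s ≤ t → Y s ⊆ Y t) ∧
    ∀ t : ℝ≥0, 0 < t → Y t = ⋃ s ∈ Set.Iio t, Y s

/-- The pointwise join on `𝒴`. -/
def joinY {M : Type*} (Y Z : ℝ≥0 → Set (M × M)) : ℝ≥0 → Set (M × M) :=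
  fun t => poJoin (Y t) (Z t)

/-- The support of a partial order `V`. -/
def suppV {M : Type*} (V : Set (M × M)) : Set M :=
  {j : M | ∃ k : M, k ≠ j ∧ ((j, k) ∈ V ∨ (k, j) ∈ V)}

/-- The support of an order process `Y ∈ 𝒴`. -/
def suppY {M : Type*} (Y : ℝ≥0 → Set (M × M)) : Set M := ⋃ t : ℝ≥0, suppV (Y t)

/-- Membership in `𝒵`: elements of `𝒴` with finite support. -/
def MemZ {M : Type*} (Y : ℝ≥0 → Set (M × M)) : Prop := MemY Y ∧ (suppY Y).Finite

/-- The delayed process `Z₋ε` (`ℝ≥0` has truncated subtraction, so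
`Z₋ε t = Z (t - ε)` equals `Z 0 = D` for `t ≤ ε`). -/
def shiftY {M : Type*} (Z : ℝ≥0 → Set (M × M)) (ε : ℝ≥0) : ℝ≥0 → Set (M × M) :=
  fun t => Z (t - ε)

/-- The switching-time function `f_Y` with values in `[0,∞]` (`inf ∅ = ∞`). -/
noncomputable def fY {M : Type*} (Y : ℝ≥0 → Set (M × M)) (p : M × M) : ℝ≥0∞ :=
  ⨅ (s : ℝ≥0) (_ : p ∈ Y s), (s : ℝ≥0∞)

/-- The off-diagonal pairs `(M × M) ∖ D`. -/
abbrev OffDiag (M : Type*) : Type _ := {p : M × M // p.1 ≠ p.2}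

/-- The set `𝒴̃` of ultrametric-type functions on off-diagonal pairs. -/
def tildeY (M : Type*) : Set (OffDiag M → ℝ≥0∞) :=
  {f | ∀ (j k l : M) (hjk : j ≠ k) (hkl : k ≠ l) (hjl : j ≠ l),
    f ⟨(j, l), hjl⟩ ≤ max (f ⟨(j, k), hjk⟩) (f ⟨(k, l), hkl⟩)}

/-- The switching-time function restricted to off-diagonal pairs. -/
noncomputable def fYo {M : Type*} (Y : ℝ≥0 → Set (M × M)) : OffDiag M → ℝ≥0∞ :=
  fun p => fY Y p.1

/-- `Q̃_Z`, as a subset of `𝒴̃`. -/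
def Qtilde {M : Type*} (Z : ℝ≥0 → Set (M × M)) : Set (tildeY M) :=
  {f : tildeY M | ∀ p : OffDiag M, f.1 p ≤ fYo Z p}

/-- Positive definiteness with respect to `∨` of a function on `𝒵`. -/
def PosDefZ {M : Type*} (φ : (ℝ≥0 → Set (M × M)) → ℝ) : Prop :=
  ∀ (n : ℕ) (Z : Fin n → ℝ≥0 → Set (M × M)), (∀ i, MemZ (Z i)) →
    ∀ c : Fin n → ℝ, 0 ≤ ∑ i, ∑ j, c i * c j * φ (joinY (Z i) (Z j))

/-- Continuity from below of a function on `𝒵`: `φ(Z₋ε) → φ(Z)` as `ε ↓ 0`. -/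
def ContFromBelow {M : Type*} (φ : (ℝ≥0 → Set (M × M)) → ℝ) : Prop :=
  ∀ Z : ℝ≥0 → Set (M × M), MemZ Z →
    Filter.Tendsto (fun ε : ℝ≥0 => φ (shiftY Z ε)) (nhdsWithin 0 (Set.Ioi 0)) (nhds (φ Z))

section AuxLemmas

open Filter MeasureTheory

variable {M : Type*}

lemma mem_poGen {S : Set (M × M)} {j l : M} :
    (j, l) ∈ poGen S ↔ Relation.ReflTransGen (fun a b => (a, b) ∈ S) j l := by
  constructor
  · intro h
    exact h {p | Relation.ReflTransGen (fun a b => (a, b) ∈ S) p.1 p.2}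
      ⟨⟨fun _ => Relation.ReflTransGen.refl, fun _ _ _ hjk hkl => hjk.trans hkl⟩,
        fun p hp => Relation.ReflTransGen.single (show ((p.1, p.2).1, (p.1, p.2).2) ∈ S by
          rwa [Prod.mk.eta])⟩
  · intro h V hV
    induction h with
    | refl => exact hV.1.1 j
    | tail _ hbc ih => exact hV.1.2 _ _ _ ih (hV.2 hbc)

lemma subset_poGen {S : Set (M × M)} : S ⊆ poGen S := fun _ hp _ hV => hV.2 hp

lemma fY_le {Y : ℝ≥0 → Set (M × M)} {p : M × M} {t : ℝ≥0} (h : p ∈ Y t) :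
    fY Y p ≤ (t : ℝ≥0∞) := iInf₂_le t h

lemma chain_bound {f : OffDiag M → ℝ≥0∞} (hf : f ∈ tildeY M)
    {Y Z : ℝ≥0 → Set (M × M)} (hfY : ∀ p, f p ≤ fYo Y p) (hfZ : ∀ p, f p ≤ fYo Z p)
    {t : ℝ≥0} {j l : M}
    (h : Relation.ReflTransGen (fun a b => (a, b) ∈ Y t ∪ Z t) j l) :
    ∀ hjl : j ≠ l, f ⟨(j, l), hjl⟩ ≤ (t : ℝ≥0∞) := by
  induction h with
  | refl => exact fun hjl => absurd rfl hjl
  | @tail b c _ hbc ih =>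
    intro hjl
    by_cases hbc' : b = c
    · subst hbc'; exact ih hjl
    · have step : f ⟨(b, c), hbc'⟩ ≤ (t : ℝ≥0∞) := by
        rcases hbc with h' | h'
        · exact (hfY ⟨(b, c), hbc'⟩).trans (fY_le h')
        · exact (hfZ ⟨(b, c), hbc'⟩).trans (fY_le h')
      by_cases hjb : j = b
      · subst hjb; exact step
      · exact (hf j b c hjb hbc' hjl).trans (max_le (ih hjb) step)

lemma Qtilde_join (Y Z : ℝ≥0 → Set (M × M)) :
    Qtilde (joinY Y Z) = Qtilde Y ∩ Qtilde Z := by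
  ext f
  constructor
  · intro h
    refine ⟨fun p => (h p).trans (le_iInf₂ fun s hs => iInf₂_le s ?_),
            fun p => (h p).trans (le_iInf₂ fun s hs => iInf₂_le s ?_)⟩
    · exact subset_poGen (Or.inl hs)
    · exact subset_poGen (Or.inr hs)
  · rintro ⟨h1, h2⟩ p
    obtain ⟨⟨j, l⟩, hjl⟩ := p
    refine le_iInf₂ fun s hs => ?_
    exact chain_bound f.2 h1 h2 (mem_poGen.mp hs) hjl

lemma measurableSet_Qtilde [Countable M] (Z : ℝ≥0 → Set (M × M)) :
    MeasurableSet (Qtilde Z) := by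
  have h : Qtilde Z = ⋂ p : OffDiag M,
      (fun f : tildeY M => f.1 p) ⁻¹' Set.Iic (fYo Z p) := by
    ext f; simp [Qtilde, Set.mem_iInter]
  rw [h]
  exact MeasurableSet.iInter fun p =>
    ((measurable_pi_apply p).comp measurable_subtype_coe) measurableSet_Iic

lemma Qtilde_diag_eq_univ : Qtilde (fun _ : ℝ≥0 => diagRel M) = (Set.univ : Set (tildeY M)) := by
  refine Set.eq_univ_of_forall fun f p => ?_
  obtain ⟨⟨j, l⟩, hjl⟩ := p
  have : fYo (fun _ : ℝ≥0 => diagRel M) ⟨(j, l), hjl⟩ = ∞ := by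
    simp [fYo, fY, diagRel, hjl]
  simp [this]

lemma fYo_le_shift {Z : ℝ≥0 → Set (M × M)} (ε : ℝ≥0) (p : OffDiag M) :
    fYo Z p ≤ fYo (shiftY Z ε) p :=
  le_iInf₂ fun t ht => (fY_le (Y := Z) (t := t - ε) ht).trans (ENNReal.coe_le_coe.mpr tsub_le_self)

lemma fYo_shift_mono {Z : ℝ≥0 → Set (M × M)} (hZ : ∀ s t : ℝ≥0, s ≤ t → Z s ⊆ Z t)
    {ε ε' : ℝ≥0} (h : ε ≤ ε') (p : OffDiag M) :
    fYo (shiftY Z ε) p ≤ fYo (shiftY Z ε') p :=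
  le_iInf₂ fun t ht => iInf₂_le t (hZ _ _ (tsub_le_tsub_left h t) ht)

lemma fYo_shift_le {Z : ℝ≥0 → Set (M × M)} (ε : ℝ≥0) (p : OffDiag M) :
    fYo (shiftY Z ε) p ≤ fYo Z p + ε := by
  have h : fYo Z p + (ε : ℝ≥0∞) = ⨅ (s : ℝ≥0) (_ : p.1 ∈ Z s), ((s : ℝ≥0∞) + ε) := by
    simp only [fYo, fY]; simp_rw [ENNReal.iInf_add]
  rw [h]
  refine le_iInf₂ fun s hs => ?_
  have hmem : p.1 ∈ Z ((s + ε) - ε) := by rwa [add_tsub_cancel_right]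
  exact (fY_le (Y := shiftY Z ε) hmem).trans_eq (by push_cast; ring)

end AuxLemmas

/-- For a Borel probability measure `μ` on `𝒴̃`, the function
`φ(Z) := μ(Q̃_Z)` is normalised, positive definite with respect to `∨`,
and continuous from below. -/
theorem phi_of_measure {M : Type*} [Countable M] [Infinite M]
    (μ : MeasureTheory.Measure (tildeY M)) [MeasureTheory.IsProbabilityMeasure μ] :
    (μ (Qtilde (fun _ : ℝ≥0 => diagRel M))).toReal = 1 ∧
      PosDefZ (fun Z : ℝ≥0 → Set (M × M) => (μ (Qtilde Z)).toReal) ∧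
      ContFromBelow (fun Z : ℝ≥0 → Set (M × M) => (μ (Qtilde Z)).toReal) := by

  classical
  have hQmeas : ∀ W : ℝ≥0 → Set (M × M), MeasurableSet (Qtilde W) :=
    fun W => measurableSet_Qtilde W
  refine ⟨?_, ?_, ?_⟩
  · rw [Qtilde_diag_eq_univ, MeasureTheory.measure_univ, ENNReal.toReal_one]
  · intro n Z _ c
    set Q : Fin n → Set (tildeY M) := fun i => Qtilde (Z i) with hQ
    set g : Fin n → tildeY M → ℝ := fun i => (Q i).indicator (1 : tildeY M → ℝ) with hg
    have hint : ∀ i j : Fin n,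
        MeasureTheory.Integrable
          (fun x => c i * c j * (Q i ∩ Q j).indicator (1 : tildeY M → ℝ) x) μ :=
      fun i j => (((MeasureTheory.integrable_const (1 : ℝ)).indicator
        ((hQmeas (Z i)).inter (hQmeas (Z j)))).const_mul _)
    have key : ∑ i, ∑ j, c i * c j * (μ (Qtilde (joinY (Z i) (Z j)))).toReal
        = ∫ x, (∑ i, c i * g i x) ^ 2 ∂μ := by
      have hsq : ∀ x : tildeY M, (∑ i, c i * g i x) ^ 2
          = ∑ i, ∑ j, c i * c j * (Q i ∩ Q j).indicator (1 : tildeY M → ℝ) x := by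
        intro x
        rw [sq, Finset.sum_mul_sum]
        refine Finset.sum_congr rfl fun i _ => Finset.sum_congr rfl fun j _ => ?_
        have h1 : (Q i ∩ Q j).indicator (1 : tildeY M → ℝ) x = g i x * g j x := by
          by_cases hi : x ∈ Q i <;> by_cases hj : x ∈ Q j <;>
            simp [hg, Set.indicator, hi, hj]
        rw [h1, hg]; ring
      rw [MeasureTheory.integral_congr_ae (Filter.Eventually.of_forall hsq)]
      rw [MeasureTheory.integral_finset_sum _ fun i _ =>
        MeasureTheory.integrable_finset_sum _ fun j _ => hint i j]
      refine Finset.sum_congr rfl fun i _ => ?_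
      rw [MeasureTheory.integral_finset_sum _ fun j _ => hint i j]
      refine Finset.sum_congr rfl fun j _ => ?_
      rw [MeasureTheory.integral_const_mul _ _,
        MeasureTheory.integral_indicator_one ((hQmeas (Z i)).inter (hQmeas (Z j))),
        Qtilde_join, MeasureTheory.measureReal_def]
    rw [key]
    exact MeasureTheory.integral_nonneg fun x => sq_nonneg _
  · intro Z hZ
    have hZmono : ∀ s t : ℝ≥0, s ≤ t → Z s ⊆ Z t := hZ.1.2.2.1
    set S : ℝ≥0 → Set (tildeY M) := fun ε => Qtilde (shiftY Z ε) with hS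
    have hmonoS : Monotone S := fun a b hab f hf p =>
      (hf p).trans (fYo_shift_mono hZmono hab p)
    have hsub : ∀ ε : ℝ≥0, Qtilde Z ⊆ S ε := fun ε f hf p =>
      (hf p).trans (fYo_le_shift ε p)
    set u : ℕ → ℝ≥0 := fun n => ((n : ℝ≥0) + 1)⁻¹ with hu
    have hu_pos : ∀ n, 0 < u n := fun n => by positivity
    have hu_anti : Antitone u := fun a b hab => by
      apply inv_anti₀ (by positivity)
      exact_mod_cast add_le_add_left (Nat.cast_le.mpr hab) 1
    have hSanti : Antitone fun n => S (u n) := fun a b hab => hmonoS (hu_anti hab)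
    have hInter : ⋂ n, S (u n) = Qtilde Z := by
      refine subset_antisymm (fun f hf p => ?_) (Set.subset_iInter fun n => hsub _)
      refine ENNReal.le_of_forall_pos_le_add fun ε hε _ => ?_
      obtain ⟨n, hn⟩ := exists_nat_gt (ε⁻¹ : ℝ≥0)
      have hun : u n ≤ ε := by
        have h1 : (ε⁻¹ : ℝ≥0) < (n : ℝ≥0) + 1 := hn.trans (lt_add_one _)
        have := inv_strictAnti₀ (inv_pos.mpr hε) h1
        rw [inv_inv] at this
        exact this.le
      have hfn := Set.mem_iInter.mp hf n p
      calc f.1 p ≤ fYo (shiftY Z (u n)) p := hfn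
        _ ≤ fYo Z p + u n := fYo_shift_le _ p
        _ ≤ fYo Z p + ε := add_le_add_right (by exact_mod_cast hun) _
    have hiInf : ⨅ n, μ (S (u n)) = μ (Qtilde Z) := by
      rw [← hInter]
      exact (hSanti.measure_iInter (fun n => (hQmeas _).nullMeasurableSet)
        ⟨0, MeasureTheory.measure_ne_top μ _⟩).symm
    have hgmono : Monotone fun ε => μ (S ε) := fun a b hab => MeasureTheory.measure_mono (hmonoS hab)
    have htend := hgmono.tendsto_nhdsGT 0
    have hsInf : sInf ((fun ε => μ (S ε)) '' Set.Ioi 0) = μ (Qtilde Z) := by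
      refine le_antisymm ?_ (le_sInf fun x hx => ?_)
      · refine le_trans (le_iInf fun n => sInf_le ?_) hiInf.le
        exact Set.mem_image_of_mem _ (hu_pos n)
      · obtain ⟨ε, hε, rfl⟩ := hx
        exact MeasureTheory.measure_mono (hsub ε)
    rw [hsInf] at htend
    have hfin : μ (Qtilde Z) ≠ ∞ := MeasureTheory.measure_ne_top μ _
    have := (ENNReal.tendsto_toReal hfin).comp htend
    have hS0 : shiftY Z 0 = Z := funext fun t => by rw [shiftY, tsub_zero]
    exact this
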